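/- (Corollary 1) Let V : [0,1] → ℝ be bounded and convex, with x ↦ V(Γ_x(b)) W_b(x) μ-integrable for every b, and suppose V satisfies the Bellman equation V(b) = max{ λ b + β ∫_X V(Γ_x(b)) W_b(x) dμ(x), λ − c + β V(1−p) } for all b ∈ [0,1]. Define f(b) = λ b − (λ − c) + β ∫_X V(Γ_x(b)) W_b(x) dμ(x) − β V(1−p). Then for every μ₀ ≥ 0 there exists ξ ∈ ℝ such that the sublevel set { b ∈ [0,1] : f(b) ≤ −μ₀ } equals [0, ξ] ∩ [0,1] (the empty set when ξ < 0). -/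

import Mathlib

open MeasureTheory

/-- Unnormalized observation probability `W_b(x) = Q1(x) b + Q0(x)(1-b)`. -/
noncomputable def Wf {X : Type*} (Q0 Q1 : X → ℝ) (b : ℝ) (x : X) : ℝ :=
  Q1 x * b + Q0 x * (1 - b)

/-- Do-nothing belief update `Γ_x(b) = (1-p) Q1(x) b / W_b(x)`; since in `ℝ`
division by zero yields `0`, this automatically satisfies the convention
`Γ_x(b) = 0` when `W_b(x) = 0`. -/
noncomputable def Gf {X : Type*} (p : ℝ) (Q0 Q1 : X → ℝ) (x : X) (b : ℝ) : ℝ :=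
  (1 - p) * Q1 x * b / Wf Q0 Q1 b x

set_option maxHeartbeats 3200000 in
/-- **Corollary 1.** Let `V : [0,1] → ℝ` be bounded and convex,
with `x ↦ V(Γ_x(b)) W_b(x)` μ-integrable for every `b`, satisfying the
Bellman equation
`V(b) = max{ λ b + β ∫ V(Γ_x(b)) W_b(x) dμ(x), λ − c + β V(1−p) }` on `[0,1]`.
Define `f(b) = λ b − (λ − c) + β ∫ V(Γ_x(b)) W_b(x) dμ(x) − β V(1−p)`.  Then
for every `μ₀ ≥ 0` there exists `ξ ∈ ℝ` such that
`{ b ∈ [0,1] : f(b) ≤ −μ₀ } = [0, ξ] ∩ [0,1]` (empty when `ξ < 0`). -/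
theorem adr_f_sublevel_sets_are_intervals
    {X : Type*} [MeasurableSpace X] (μ : Measure X) [SigmaFinite μ]
    (p lam c β : ℝ)
    (hp : p ∈ Set.Icc (0 : ℝ) 1) (hlam : 0 < lam) (hc : 0 < c)
    (hβ : β ∈ Set.Ioo (0 : ℝ) 1)
    (Q0 Q1 : X → ℝ)
    (hQ0meas : Measurable Q0) (hQ1meas : Measurable Q1)
    (hQ0nn : ∀ x, 0 ≤ Q0 x) (hQ1nn : ∀ x, 0 ≤ Q1 x)
    (hQ0int : ∫ x, Q0 x ∂μ = 1) (hQ1int : ∫ x, Q1 x ∂μ = 1)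
    (V : ℝ → ℝ)
    (hVbdd : ∃ C, ∀ b ∈ Set.Icc (0 : ℝ) 1, |V b| ≤ C)
    (hVconv : ConvexOn ℝ (Set.Icc (0 : ℝ) 1) V)
    (hVint : ∀ b ∈ Set.Icc (0 : ℝ) 1,
      Integrable (fun x => V (Gf p Q0 Q1 x b) * Wf Q0 Q1 b x) μ)
    (hBellman : ∀ b ∈ Set.Icc (0 : ℝ) 1,
      V b = max (lam * b + β * ∫ x, V (Gf p Q0 Q1 x b) * Wf Q0 Q1 b x ∂μ)
                (lam - c + β * V (1 - p)))
    (f : ℝ → ℝ)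
    (hf : ∀ b, f b = lam * b - (lam - c) +
      β * ∫ x, V (Gf p Q0 Q1 x b) * Wf Q0 Q1 b x ∂μ - β * V (1 - p)) :
    ∀ μ₀ : ℝ, 0 ≤ μ₀ →
      ∃ ξ : ℝ, {b ∈ Set.Icc (0 : ℝ) 1 | f b ≤ -μ₀} =
        Set.Icc 0 ξ ∩ Set.Icc (0 : ℝ) 1 := by
  intro μ₀ hμ₀
  obtain ⟨C, hC⟩ := hVbdd
  have hβ0 := hβ.1
  have hβ1 := hβ.2
  set K : ℝ := lam - c + β * V (1 - p) with hK
  set g : ℝ → ℝ := fun b => ∫ x, V (Gf p Q0 Q1 x b) * Wf Q0 Q1 b x ∂μ with hg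
  have hfg : ∀ b, f b = lam * b + β * g b - K := by
    intro b; rw [hf b, hK, hg]; ring
  have hBel : ∀ b ∈ Set.Icc (0 : ℝ) 1, V b = max (lam * b + β * g b) K := by
    intro b hb; rw [hBellman b hb, hK, hg]
  -- integrability of the densities
  have hQ0i : Integrable Q0 μ := by
    by_contra h
    rw [integral_undef h] at hQ0int
    exact zero_ne_one hQ0int
  have hQ1i : Integrable Q1 μ := by
    by_contra h
    rw [integral_undef h] at hQ1int
    exact zero_ne_one hQ1int
  -- basic facts on W
  have hWnn : ∀ b ∈ Set.Icc (0 : ℝ) 1, ∀ x, 0 ≤ Wf Q0 Q1 b x := by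
    intro b hb x
    exact add_nonneg (mul_nonneg (hQ1nn x) hb.1)
      (mul_nonneg (hQ0nn x) (by linarith [hb.2]))
  have hWi : ∀ b : ℝ, Integrable (fun x => Wf Q0 Q1 b x) μ := by
    intro b
    exact (hQ1i.mul_const b).add (hQ0i.mul_const (1 - b))
  have hWint1 : ∀ b : ℝ, ∫ x, Wf Q0 Q1 b x ∂μ = 1 := by
    intro b
    have : ∫ x, Wf Q0 Q1 b x ∂μ
        = (∫ x, Q1 x ∂μ) * b + (∫ x, Q0 x ∂μ) * (1 - b) := by
      rw [← integral_mul_const, ← integral_mul_const,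
        ← integral_add (hQ1i.mul_const b) (hQ0i.mul_const (1 - b))]
      rfl
    rw [this, hQ0int, hQ1int]; ring
  -- Γ stays in [0,1]
  have hΓI : ∀ b ∈ Set.Icc (0 : ℝ) 1, ∀ x, Gf p Q0 Q1 x b ∈ Set.Icc (0 : ℝ) 1 := by
    intro b hb x
    rcases eq_or_lt_of_le (hWnn b hb x) with hW | hW
    · rw [Gf, ← hW, div_zero]
      exact ⟨le_refl 0, zero_le_one⟩
    · constructor
      · exact div_nonneg (mul_nonneg (mul_nonneg (by linarith [hp.2] : (0:ℝ) ≤ 1 - p)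
          (hQ1nn x)) hb.1) hW.le
      · rw [Gf, div_le_one hW, Wf]
        nlinarith [mul_nonneg hp.1 (mul_nonneg (hQ1nn x) hb.1),
          mul_nonneg (hQ0nn x) (by linarith [hb.2] : (0:ℝ) ≤ 1 - b)]
  have hVgeK : ∀ y ∈ Set.Icc (0 : ℝ) 1, K ≤ V y := by
    intro y hy; rw [hBel y hy]; exact le_max_right _ _
  -- generic lower bound on g
  have hglb : ∀ b ∈ Set.Icc (0 : ℝ) 1, ∀ m : ℝ,
      (∀ y ∈ Set.Icc (0 : ℝ) 1, m ≤ V y) → m ≤ g b := by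
    intro b hb m hm
    have h1 : ∀ x, m * Wf Q0 Q1 b x ≤ V (Gf p Q0 Q1 x b) * Wf Q0 Q1 b x := by
      intro x
      exact mul_le_mul_of_nonneg_right (hm _ (hΓI b hb x)) (hWnn b hb x)
    have h2 := integral_mono ((hWi b).const_mul m) (hVint b hb) h1
    rw [integral_const_mul, hWint1 b, mul_one] at h2
    exact h2
  have hC0 : 0 ≤ C := le_trans (abs_nonneg _) (hC 0 ⟨le_refl 0, zero_le_one⟩)
  -- V is nonnegative on [0,1]
  have hVnn : ∀ y ∈ Set.Icc (0 : ℝ) 1, 0 ≤ V y := by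
    have hiter : ∀ n : ℕ, ∀ y ∈ Set.Icc (0 : ℝ) 1, -(β ^ n * C) ≤ V y := by
      intro n
      induction n with
      | zero =>
        intro y hy
        have := hC y hy
        rw [pow_zero, one_mul]
        have := neg_abs_le (V y)
        linarith [abs_le.mp (hC y hy)]
      | succ n ih =>
        intro y hy
        have hgy : -(β ^ n * C) ≤ g y := hglb y hy _ ih
        have hVy := hBel y hy
        have h1 : lam * y + β * g y ≤ V y := by
          rw [hVy]; exact le_max_left _ _
        have h2 : 0 ≤ lam * y := mul_nonneg hlam.le hy.1
        have : β * -(β ^ n * C) ≤ β * g y :=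
          mul_le_mul_of_nonneg_left hgy hβ0.le
        have hpow : β * -(β ^ n * C) = -(β ^ (n + 1) * C) := by ring
        linarith [hpow ▸ this]
    intro y hy
    have htend : Filter.Tendsto (fun n : ℕ => -(β ^ n * C)) Filter.atTop (nhds (-(0 * C))) :=
      (((tendsto_pow_atTop_nhds_zero_of_lt_one hβ0.le hβ1).mul_const C).neg)
    rw [zero_mul, neg_zero] at htend
    exact le_of_tendsto' htend (fun n => hiter n y hy)
  -- value of V at 0
  have h0I : (0 : ℝ) ∈ Set.Icc (0 : ℝ) 1 := ⟨le_refl 0, zero_le_one⟩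
  have h1I : (1 : ℝ) ∈ Set.Icc (0 : ℝ) 1 := ⟨zero_le_one, le_refl 1⟩
  have hg0 : g 0 = V 0 := by
    have hfun : (fun x => V (Gf p Q0 Q1 x 0) * Wf Q0 Q1 0 x) = fun x => V 0 * Q0 x := by
      funext x
      have h1 : Gf p Q0 Q1 x 0 = 0 := by
        rw [Gf, mul_zero, zero_div]
      have h2 : Wf Q0 Q1 0 x = Q0 x := by rw [Wf]; ring
      rw [h1, h2]
    rw [hg]
    simp only []
    rw [hfun, integral_const_mul, hQ0int, mul_one]
  have hV0 : V 0 = max K 0 := by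
    have h1 := hBel 0 h0I
    rw [hg0, mul_zero, zero_add] at h1
    have h2 : 0 ≤ V 0 := hVnn 0 h0I
    have h3 : K ≤ V 0 := hVgeK 0 h0I
    rcases max_choice (β * V 0) K with h | h
    · have hV00 : V 0 = 0 := by nlinarith
      rw [hV00, max_eq_right]
      rw [hV00] at h3; linarith
    · rw [h] at h1
      rw [h1, max_eq_left]
      linarith
  -- f attains its minimum at 0
  have hf0 : ∀ b ∈ Set.Icc (0 : ℝ) 1, f 0 ≤ f b := by
    intro b hb
    have h1 : max K 0 ≤ g b := by
      apply hglb b hb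
      intro y hy
      exact max_le (hVgeK y hy) (hVnn y hy)
    have h2 : 0 ≤ lam * b := mul_nonneg hlam.le hb.1
    have h3 : β * (max K 0) ≤ β * g b := mul_le_mul_of_nonneg_left h1 hβ0.le
    rw [hfg b, hfg 0, hg0, hV0]
    linarith
  -- pointwise convexity inequality
  have hNkey : ∀ b ∈ Set.Icc (0 : ℝ) 1, ∀ x,
      (1 - p) * Q1 x * b = Gf p Q0 Q1 x b * Wf Q0 Q1 b x := by
    intro b hb x
    rcases eq_or_ne (Wf Q0 Q1 b x) 0 with hW | hW
    · rw [hW, mul_zero]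
      have h1 : 0 ≤ Q1 x * b := mul_nonneg (hQ1nn x) hb.1
      have h2 : 0 ≤ Q0 x * (1 - b) := mul_nonneg (hQ0nn x) (by linarith [hb.2])
      have h3 : Q1 x * b = 0 := by rw [Wf] at hW; linarith
      rw [mul_assoc, h3, mul_zero]
    · rw [Gf, div_mul_cancel₀ _ hW]
  have key : ∀ b₁ ∈ Set.Icc (0 : ℝ) 1, ∀ b₂ ∈ Set.Icc (0 : ℝ) 1,
      ∀ a t : ℝ, 0 ≤ a → 0 ≤ t → a + t = 1 → ∀ x,
      V (Gf p Q0 Q1 x (a * b₁ + t * b₂)) * Wf Q0 Q1 (a * b₁ + t * b₂) x ≤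
        a * (V (Gf p Q0 Q1 x b₁) * Wf Q0 Q1 b₁ x) +
        t * (V (Gf p Q0 Q1 x b₂) * Wf Q0 Q1 b₂ x) := by
    intro b₁ hb₁ b₂ hb₂ a t ha ht hat x
    have hmid : a * b₁ + t * b₂ ∈ Set.Icc (0 : ℝ) 1 := by
      constructor
      · exact add_nonneg (mul_nonneg ha hb₁.1) (mul_nonneg ht hb₂.1)
      · nlinarith [mul_le_mul_of_nonneg_left hb₁.2 ha, mul_le_mul_of_nonneg_left hb₂.2 ht]
    have hw : Wf Q0 Q1 (a * b₁ + t * b₂) x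
        = a * Wf Q0 Q1 b₁ x + t * Wf Q0 Q1 b₂ x := by
      have h1 : t = 1 - a := by linarith
      subst h1
      simp only [Wf]; ring
    rcases eq_or_lt_of_le (hWnn _ hmid x) with hw0 | hw0
    · -- the middle weight is zero
      have hW1 : a * Wf Q0 Q1 b₁ x = 0 := by
        have := mul_nonneg ha (hWnn b₁ hb₁ x)
        have := mul_nonneg ht (hWnn b₂ hb₂ x)
        linarith [hw0.symm ▸ hw]
      have hW2 : t * Wf Q0 Q1 b₂ x = 0 := by
        have := mul_nonneg ha (hWnn b₁ hb₁ x)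
        have := mul_nonneg ht (hWnn b₂ hb₂ x)
        linarith [hw0.symm ▸ hw]
      have e1 : a * (V (Gf p Q0 Q1 x b₁) * Wf Q0 Q1 b₁ x)
          = V (Gf p Q0 Q1 x b₁) * (a * Wf Q0 Q1 b₁ x) := by ring
      have e2 : t * (V (Gf p Q0 Q1 x b₂) * Wf Q0 Q1 b₂ x)
          = V (Gf p Q0 Q1 x b₂) * (t * Wf Q0 Q1 b₂ x) := by ring
      rw [← hw0, mul_zero, e1, e2, hW1, hW2, mul_zero, mul_zero, add_zero]
    · -- positive middle weight
      set W1 := Wf Q0 Q1 b₁ x with hW1d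
      set W2 := Wf Q0 Q1 b₂ x with hW2d
      set w := Wf Q0 Q1 (a * b₁ + t * b₂) x with hwd
      have hΓmid : Gf p Q0 Q1 x (a * b₁ + t * b₂)
          = (a * W1 / w) * Gf p Q0 Q1 x b₁ + (t * W2 / w) * Gf p Q0 Q1 x b₂ := by
        rw [Gf]
        rw [show (1 - p) * Q1 x * (a * b₁ + t * b₂)
            = a * ((1 - p) * Q1 x * b₁) + t * ((1 - p) * Q1 x * b₂) by ring,
          hNkey b₁ hb₁ x, hNkey b₂ hb₂ x]
        rw [← hW1d, ← hW2d, ← hwd]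
        field_simp
      have hu : 0 ≤ a * W1 / w :=
        div_nonneg (mul_nonneg ha (hWnn b₁ hb₁ x)) hw0.le
      have hv : 0 ≤ t * W2 / w :=
        div_nonneg (mul_nonneg ht (hWnn b₂ hb₂ x)) hw0.le
      have huv : a * W1 / w + t * W2 / w = 1 := by
        rw [← add_div, ← hw, div_self hw0.ne']
      have hconv := hVconv.2 (hΓI b₁ hb₁ x) (hΓI b₂ hb₂ x) hu hv huv
      simp only [smul_eq_mul] at hconv
      rw [hΓmid]
      calc V ((a * W1 / w) * Gf p Q0 Q1 x b₁ + (t * W2 / w) * Gf p Q0 Q1 x b₂) * w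
          ≤ ((a * W1 / w) * V (Gf p Q0 Q1 x b₁) + (t * W2 / w) * V (Gf p Q0 Q1 x b₂)) * w :=
            mul_le_mul_of_nonneg_right hconv hw0.le
        _ = a * (V (Gf p Q0 Q1 x b₁) * W1) + t * (V (Gf p Q0 Q1 x b₂) * W2) := by
            field_simp
  -- convexity of g, then of f
  have hgconv : ∀ b₁ ∈ Set.Icc (0 : ℝ) 1, ∀ b₂ ∈ Set.Icc (0 : ℝ) 1,
      ∀ a t : ℝ, 0 ≤ a → 0 ≤ t → a + t = 1 →
      g (a * b₁ + t * b₂) ≤ a * g b₁ + t * g b₂ := by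
    intro b₁ hb₁ b₂ hb₂ a t ha ht hat
    have hmid : a * b₁ + t * b₂ ∈ Set.Icc (0 : ℝ) 1 := by
      constructor
      · exact add_nonneg (mul_nonneg ha hb₁.1) (mul_nonneg ht hb₂.1)
      · nlinarith [mul_le_mul_of_nonneg_left hb₁.2 ha, mul_le_mul_of_nonneg_left hb₂.2 ht]
    have hint : Integrable (fun x =>
        a * (V (Gf p Q0 Q1 x b₁) * Wf Q0 Q1 b₁ x) +
        t * (V (Gf p Q0 Q1 x b₂) * Wf Q0 Q1 b₂ x)) μ :=
      ((hVint b₁ hb₁).const_mul a).add ((hVint b₂ hb₂).const_mul t)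
    have hmono := integral_mono (hVint _ hmid) hint
      (key b₁ hb₁ b₂ hb₂ a t ha ht hat)
    rw [integral_add ((hVint b₁ hb₁).const_mul a) ((hVint b₂ hb₂).const_mul t),
      integral_const_mul, integral_const_mul] at hmono
    exact hmono
  have hfconv : ∀ b₁ ∈ Set.Icc (0 : ℝ) 1, ∀ b₂ ∈ Set.Icc (0 : ℝ) 1,
      ∀ a t : ℝ, 0 ≤ a → 0 ≤ t → a + t = 1 →
      f (a * b₁ + t * b₂) ≤ a * f b₁ + t * f b₂ := by
    intro b₁ hb₁ b₂ hb₂ a t ha ht hat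
    have h1 := hgconv b₁ hb₁ b₂ hb₂ a t ha ht hat
    have h2 : β * g (a * b₁ + t * b₂) ≤ β * (a * g b₁ + t * g b₂) :=
      mul_le_mul_of_nonneg_left h1 hβ0.le
    have hK1 : a * K + t * K = K := by rw [← add_mul, hat, one_mul]
    rw [hfg, hfg, hfg]
    ring_nf
    ring_nf at h2 hK1
    linarith [h2, hK1]
  -- monotonicity of f on [0,1]
  have hmono : ∀ b₁ ∈ Set.Icc (0 : ℝ) 1, ∀ b₂ ∈ Set.Icc (0 : ℝ) 1,
      b₁ ≤ b₂ → f b₁ ≤ f b₂ := by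
    intro b₁ hb₁ b₂ hb₂ hle
    rcases eq_or_lt_of_le hb₂.1 with h20 | h20
    · have hb10 : b₁ = 0 := le_antisymm (h20 ▸ hle) hb₁.1
      rw [hb10, ← h20]
    · set t := b₁ / b₂ with htd
      have ht0 : 0 ≤ t := div_nonneg hb₁.1 h20.le
      have ht1 : t ≤ 1 := (div_le_one h20).2 hle
      have hcomb := hfconv 0 h0I b₂ hb₂ (1 - t) t (by linarith) ht0 (by ring)
      rw [mul_zero, zero_add, div_mul_cancel₀ _ h20.ne'] at hcomb
      have hf0b := hf0 b₂ hb₂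
      nlinarith [hcomb, hf0b]
  -- f cannot be ≤ -μ₀ on all of [0,1)
  have hnotail : ∃ b₀ ∈ Set.Icc (0 : ℝ) 1, b₀ < 1 ∧ -μ₀ < f b₀ := by
    by_contra hcon
    push_neg at hcon
    have hall : ∀ b, 0 ≤ b → b < 1 → f b ≤ -μ₀ := by
      intro b h0 h1
      exact hcon b ⟨h0, h1.le⟩ h1
    have hVKb : ∀ b, 0 ≤ b → b < 1 → V b = K := by
      intro b h0 h1
      have hBb := hBel b ⟨h0, h1.le⟩
      have hfb := hall b h0 h1
      rw [hfg] at hfb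
      rw [hBb, max_eq_right (by linarith)]
    rcases lt_or_ge 0 p with hp0 | hp0
    · -- case p > 0
      have hV1p : V (1 - p) = K := hVKb (1 - p) (by linarith [hp.2]) (by linarith)
      have hKK : K = lam - c + β * K := by
        have h := hK
        rw [hV1p] at h
        exact h
      -- lower bound on f near 1
      set b : ℝ := max 0 (1 - (c + μ₀) / (2 * lam)) with hbd
      have hb0 : 0 ≤ b := le_max_left _ _
      have hb1 : b < 1 := by
        apply max_lt zero_lt_one
        have : 0 < (c + μ₀) / (2 * lam) := by positivity
        linarith
      have hgb : K ≤ g b := hglb b ⟨hb0, hb1.le⟩ K hVgeK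
      have hfb : f b ≤ -μ₀ := hall b hb0 hb1
      rw [hfg] at hfb
      have hblb : 1 - (c + μ₀) / (2 * lam) ≤ b := le_max_right _ _
      have hd : lam * (1 - (c + μ₀) / (2 * lam)) = lam - (c + μ₀) / 2 := by
        field_simp
      have hbb : lam - (c + μ₀) / 2 ≤ lam * b := by
        rw [← hd]; exact mul_le_mul_of_nonneg_left hblb hlam.le
      have hβg : β * K ≤ β * g b := mul_le_mul_of_nonneg_left hgb hβ0.le
      linarith
    · -- case p = 0
      have hp00 : p = 0 := le_antisymm hp0 hp.1
      subst hp00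
      simp only [sub_zero] at hK
      have hg1 : g 1 = V 1 := by
        have hfun : (fun x => V (Gf 0 Q0 Q1 x 1) * Wf Q0 Q1 1 x) = fun x => V 1 * Q1 x := by
          funext x
          have hW : Wf Q0 Q1 1 x = Q1 x := by rw [Wf]; ring
          rcases eq_or_ne (Q1 x) 0 with hx | hx
          · rw [hW, hx, mul_zero, mul_zero]
          · have hΓ : Gf 0 Q0 Q1 x 1 = 1 := by
              rw [Gf, hW, sub_zero, one_mul, mul_one, div_self hx]
            rw [hΓ, hW]
        rw [hg]
        simp only []
        rw [hfun, integral_const_mul, hQ1int, mul_one]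
      have hV1K : K ≤ V 1 := hVgeK 1 h1I
      obtain ⟨D, hDd⟩ : ∃ D : ℝ, D = V 1 - K := ⟨_, rfl⟩
      have hD0 : 0 ≤ D := by rw [hDd]; linarith
      have hV1 : V 1 = K + D := by rw [hDd]; ring
      -- the set where the belief jumps straight to 1
      set A : Set X := {x | Q0 x = 0 ∧ 0 < Q1 x} with hAd
      have hAmeas : MeasurableSet A := by
        have h1 : MeasurableSet {x | Q0 x = 0} := hQ0meas (measurableSet_singleton 0)
        have h2 : MeasurableSet {x | 0 < Q1 x} := hQ1meas measurableSet_Ioi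
        exact h1.inter h2
      set α : ℝ := ∫ x in A, Q1 x ∂μ with hαd
      have hα0 : 0 ≤ α := setIntegral_nonneg hAmeas (fun x _ => hQ1nn x)
      have hα1 : α ≤ 1 := by
        rw [hαd, ← hQ1int]
        exact setIntegral_le_integral hQ1i (Filter.Eventually.of_forall hQ1nn)
      -- pointwise lower bound for the integrand, for 0 < b < 1
      have hpt : ∀ b, 0 < b → b < 1 → ∀ x,
          K * Wf Q0 Q1 b x + D * A.indicator Q1 x * b ≤
            V (Gf 0 Q0 Q1 x b) * Wf Q0 Q1 b x := by
        intro b hb0 hb1 x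
        by_cases hx : x ∈ A
        · have hq0 : Q0 x = 0 := hx.1
          have hq1 : 0 < Q1 x := hx.2
          have hW : Wf Q0 Q1 b x = Q1 x * b := by rw [Wf, hq0]; ring
          have hΓ : Gf 0 Q0 Q1 x b = 1 := by
            rw [Gf, hW, sub_zero, one_mul, div_self (mul_pos hq1 hb0).ne']
          rw [hΓ, hW, Set.indicator_of_mem hx, hV1]
          exact le_of_eq (by ring)
        · rw [Set.indicator_of_notMem hx, mul_zero, zero_mul, add_zero]
          exact mul_le_mul_of_nonneg_right
            (hVgeK _ (hΓI b ⟨hb0.le, hb1.le⟩ x)) (hWnn b ⟨hb0.le, hb1.le⟩ x)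
      -- integrated lower bound
      have hgi : ∀ b, 0 < b → b < 1 → K + D * α * b ≤ g b := by
        intro b hb0 hb1
        have hint1 : Integrable (fun x => K * Wf Q0 Q1 b x) μ := (hWi b).const_mul K
        have hint2 : Integrable (fun x => D * A.indicator Q1 x * b) μ :=
          ((hQ1i.indicator hAmeas).const_mul D).mul_const b
        have hsum : Integrable
            (fun x => K * Wf Q0 Q1 b x + D * A.indicator Q1 x * b) μ :=
          hint1.add hint2
        have hmono2 := integral_mono hsum
          (hVint b ⟨hb0.le, hb1.le⟩) (hpt b hb0 hb1)
        rw [integral_add hint1 hint2, integral_const_mul, hWint1 b, mul_one,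
          integral_mul_const, integral_const_mul, integral_indicator hAmeas,
          ← hαd] at hmono2
        exact hmono2
      -- derive the limiting inequality lam + β*D*α ≤ (1-β)*K
      have hlin : ∀ b, 0 < b → b < 1 → (lam + β * D * α) * b ≤ (1 - β) * K := by
        intro b hb0 hb1
        have h1 := hall b hb0.le hb1
        rw [hfg] at h1
        have h2 := hgi b hb0 hb1
        have h3 : β * (K + D * α * b) ≤ β * g b := mul_le_mul_of_nonneg_left h2 hβ0.le
        nlinarith
      have hgen : ∀ c' M : ℝ, 0 < c' → (∀ b : ℝ, 0 < b → b < 1 → c' * b ≤ M) →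
          c' ≤ M := by
        intro c' M hc' hall'
        by_contra hM
        push_neg at hM
        have hb0 : (0:ℝ) < max (1/2) ((M / c' + 1) / 2) :=
          lt_of_lt_of_le one_half_pos (le_max_left _ _)
        have hb1 : max (1/2) ((M / c' + 1) / 2) < 1 := by
          apply max_lt (by norm_num)
          have : M / c' < 1 := (div_lt_one hc').2 hM
          linarith
        have hble := hall' _ hb0 hb1
        have h1 : (M / c' + 1) / 2 ≤ max (1/2) ((M / c' + 1) / 2) := le_max_right _ _
        have h2 : c' * ((M / c' + 1) / 2) ≤ c' * max (1/2) ((M / c' + 1) / 2) :=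
          mul_le_mul_of_nonneg_left h1 hc'.le
        have h3 : c' * ((M / c' + 1) / 2) = (M + c') / 2 := by
          field_simp
        rw [h3] at h2
        linarith
      have hc'pos : 0 < lam + β * D * α := by
        have : 0 ≤ β * D * α := mul_nonneg (mul_nonneg hβ0.le hD0) hα0
        linarith
      have hmain : lam + β * D * α ≤ (1 - β) * K := hgen _ _ hc'pos hlin
      -- identify D = c and conclude
      have hKe : K = lam - c + β * (K + D) := by
        have h := hK
        rw [hV1] at h
        exact h
      -- so (1-β)*K = lam - c + β*D ; hmain gives c ≤ β*D*(1-α) ≤ β*D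
      have hcD : c + β * D * α ≤ β * D := by nlinarith [hmain, hKe]
      have hβD : 0 < β * D := by
        have h0 : 0 ≤ β * D * α := mul_nonneg (mul_nonneg hβ0.le hD0) hα0
        linarith
      have hDpos : 0 < D := by
        rcases hD0.lt_or_eq with h | h
        · exact h
        · rw [← h, mul_zero] at hβD; linarith
      -- Bellman at 1 forces V 1 = lam + β V 1
      have hBel1 := hBel 1 h1I
      rw [hg1, mul_one] at hBel1
      rcases max_choice (lam + β * V 1) K with hmx | hmx
      · rw [hmx] at hBel1
        -- V 1 = lam + β V 1, so (1-β) V 1 = lam, hence D = c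
        have hDc : D = c := by
          rw [hDd]
          linarith [hBel1, hK]
        rw [hDc] at hcD
        have hx1 : 0 < c * (1 - β) := mul_pos hc (by linarith)
        have hx2 : 0 ≤ β * c * α := mul_nonneg (mul_nonneg hβ0.le hc.le) hα0
        nlinarith [hcD, hx1, hx2]
      · rw [hmx] at hBel1
        rw [hBel1] at hDd
        linarith [hDd]
  -- final assembly
  obtain ⟨b₀, hb₀I, hb₀1, hb₀f⟩ := hnotail
  by_cases hS : ∃ b ∈ Set.Icc (0 : ℝ) 1, f b ≤ -μ₀
  · obtain ⟨b₁, hb₁I, hb₁f⟩ := hS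
    have h0S : f 0 ≤ -μ₀ := le_trans (hf0 b₁ hb₁I) hb₁f
    set S : Set ℝ := {b ∈ Set.Icc (0 : ℝ) 1 | f b ≤ -μ₀} with hSd
    have h0mem : (0 : ℝ) ∈ S := ⟨h0I, h0S⟩
    have hSne : S.Nonempty := ⟨0, h0mem⟩
    have hSbdd : BddAbove S := ⟨1, fun b hb => hb.1.2⟩
    set ξ : ℝ := sSup S with hξd
    have hξub : ∀ b ∈ S, b ≤ ξ := fun b hb => le_csSup hSbdd hb
    have hξ0 : 0 ≤ ξ := hξub 0 h0mem
    have hξ1 : ξ ≤ 1 := csSup_le hSne (fun b hb => hb.1.2)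
    have hξI : ξ ∈ Set.Icc (0 : ℝ) 1 := ⟨hξ0, hξ1⟩
    -- every element of S is ≤ b₀, hence ξ < 1
    have hSb₀ : ∀ b ∈ S, b ≤ b₀ := by
      intro b hb
      by_contra hlt
      push_neg at hlt
      have := hmono b₀ hb₀I b hb.1 hlt.le
      linarith [hb.2]
    have hξlt1 : ξ < 1 := lt_of_le_of_lt (csSup_le hSne hSb₀) hb₀1
    -- everything below ξ is in S
    have hbelow : ∀ y, 0 ≤ y → y < ξ → y ∈ S := by
      intro y hy0 hyξ
      obtain ⟨b, hbS, hyb⟩ := exists_lt_of_lt_csSup hSne hyξ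
      refine ⟨⟨hy0, le_trans hyb.le hbS.1.2⟩, ?_⟩
      exact le_trans (hmono y ⟨hy0, le_trans hyb.le hbS.1.2⟩ b hbS.1 hyb.le) hbS.2
    -- ξ itself is in S
    have hξS : ξ ∈ S := by
      rcases eq_or_lt_of_le hξ0 with h0ξ | h0ξ
      · rw [← h0ξ]; exact h0mem
      · refine ⟨hξI, ?_⟩
        -- limit argument along b ↗ ξ using convexity and the value at 1
        have hkey : ∀ b, 0 ≤ b → b < ξ →
            f ξ + μ₀ ≤ (ξ - b) / (1 - b) * (f 1 + μ₀) := by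
          intro b hb0 hbξ
          have hb1 : b < 1 := lt_of_lt_of_le hbξ hξ1
          have hbI : b ∈ Set.Icc (0 : ℝ) 1 := ⟨hb0, hb1.le⟩
          have hs0 : 0 ≤ (1 - ξ) / (1 - b) :=
            div_nonneg (by linarith) (by linarith)
          have hs1 : 0 ≤ (ξ - b) / (1 - b) :=
            div_nonneg (by linarith) (by linarith)
          have hsum : (1 - ξ) / (1 - b) + (ξ - b) / (1 - b) = 1 := by
            rw [← add_div]
            rw [show (1 - ξ) + (ξ - b) = 1 - b by ring]
            exact div_self (by linarith)
          have hcomb := hfconv b hbI 1 h1I _ _ hs0 hs1 hsum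
          have hbne : (1:ℝ) - b ≠ 0 := by linarith
          have hco : (1 - ξ) / (1 - b) * b + (ξ - b) / (1 - b) * 1 = ξ := by
            field_simp [hbne]
            ring
          rw [hco] at hcomb
          have hfb : f b ≤ -μ₀ := (hbelow b hb0 hbξ).2
          have h1 : (1 - ξ) / (1 - b) * f b ≤ (1 - ξ) / (1 - b) * (-μ₀) :=
            mul_le_mul_of_nonneg_left hfb hs0
          have h2 : (1 - ξ) / (1 - b) * (-μ₀) + (ξ - b) / (1 - b) * f 1
              = -μ₀ + (ξ - b) / (1 - b) * (f 1 + μ₀) := by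
            have : (1 - ξ) / (1 - b) = 1 - (ξ - b) / (1 - b) := by
              rw [eq_sub_iff_add_eq]
              rw [← add_div]
              rw [show (1 - ξ) + (ξ - b) = 1 - b by ring]
              exact div_self (by linarith)
            rw [this]
            ring
          linarith [hcomb, h1, h2.symm.le]
        -- take the limit b ↗ ξ along the sequence ξ * (n/(n+1))
        have htend : Filter.Tendsto
            (fun n : ℕ => (ξ - ξ * (1 - 1 / (n + 1))) / (1 - ξ * (1 - 1 / (n + 1))) * (f 1 + μ₀))
            Filter.atTop (nhds ((ξ - ξ * (1 - 0)) / (1 - ξ * (1 - 0)) * (f 1 + μ₀))) := by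
          apply Filter.Tendsto.mul_const
          apply Filter.Tendsto.div
          · exact (tendsto_const_nhds.sub (tendsto_const_nhds.mul
              (tendsto_const_nhds.sub tendsto_one_div_add_atTop_nhds_zero_nat)))
          · exact (tendsto_const_nhds.sub (tendsto_const_nhds.mul
              (tendsto_const_nhds.sub tendsto_one_div_add_atTop_nhds_zero_nat)))
          · simp only [sub_zero, mul_one]
            intro h
            -- 1 - ξ ≠ 0
            exact absurd (by linarith : ξ = 1) (by linarith)
        have hseq : ∀ n : ℕ, f ξ + μ₀ ≤
            (ξ - ξ * (1 - 1 / (n + 1))) / (1 - ξ * (1 - 1 / (n + 1))) * (f 1 + μ₀) := by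
          intro n
          have hn1 : (0:ℝ) < 1 / (n + 1) := by positivity
          have hn2 : 1 / ((n:ℝ) + 1) ≤ 1 := by
            rw [div_le_one (by positivity)]
            linarith [Nat.cast_nonneg (α := ℝ) n]
          apply hkey
          · have : 0 ≤ 1 - 1 / ((n:ℝ) + 1) := by linarith
            exact mul_nonneg hξ0 this
          · have h1 : ξ * (1 - 1 / ((n:ℝ) + 1)) < ξ * 1 := by
              apply mul_lt_mul_of_pos_left _ h0ξ
              linarith
            rw [mul_one] at h1
            exact h1
        have hlim := ge_of_tendsto' htend (fun n => (hseq n))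
        simp only [sub_zero, mul_one] at hlim
        rw [show ξ - ξ = 0 by ring] at hlim
        rw [zero_div, zero_mul] at hlim
        linarith
    refine ⟨ξ, ?_⟩
    ext b
    constructor
    · intro hb
      exact ⟨⟨hb.1.1, hξub b hb⟩, hb.1⟩
    · rintro ⟨⟨hb0, hbξ⟩, hbI⟩
      exact ⟨hbI, le_trans (hmono b hbI ξ hξI hbξ) hξS.2⟩
  · push_neg at hS
    refine ⟨-1, ?_⟩
    ext b
    simp only [Set.mem_setOf_eq, Set.mem_inter_iff, Set.mem_Icc]
    constructor
    · rintro ⟨hbI, hbf⟩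
      exact absurd hbf (not_le.2 (hS b hbI))
    · rintro ⟨⟨hb0, hbm1⟩, _⟩
      linarith
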